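/- Let (S,D) be a complete metric space, φ: S → [0,∞], and M > 0. Let Θ¹_M, Θ²_M : [0,∞) → [0,∞) be continuous increasing functions with Θ¹_M(t)/t → 1 and Θ²_M(t)/t → 0 as t → 0⁺. Assume that for all z₀ ∈ S with φ(z₀) ≤ M and all z₁ ∈ S there exists a curve (γ_s)_{s∈[0,1]} ⊂ S with γ₀ = z₀, γ₁ = z₁, such that D(z₀, γ_s) ≤ s·Θ¹_M(D(z₀,z₁)) and φ(γ_s) ≤ (1−s)φ(z₀) + s·φ(z₁) + s·Θ²_M(D(z₀,z₁)) for all s ∈ [0,1]. Then for every z ∈ S with φ(z) ≤ M the local slope admits the representation |∂φ|_D(z) = sup_{w ∈ S, w ≠ z} (φ(z) − φ(w) − Θ²_M(D(z,w)))⁺ / Θ¹_M(D(z,w)). -/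

import Mathlib

open Filter Topology Set ENNReal

/-- The local slope `|∂φ|_D(u) := limsup_{w→u} (φ(u)−φ(w))⁺ / D(u,w)` (with values in
`[0,∞]`; note that truncated subtraction in `ℝ≥0∞` is exactly the positive part). -/
noncomputable def localSlope {S : Type*} [MetricSpace S] (φ : S → ℝ≥0∞) (u : S) : ℝ≥0∞ :=
  Filter.limsup (fun w => (φ u - φ w) / edist u w) (𝓝[≠] u)

/-- Under the generalized convexity assumption along curves with moduli
`Θ¹_M, Θ²_M`, the local slope admits the global representation
`|∂φ|_D(z) = sup_{w ≠ z} (φ(z) − φ(w) − Θ²_M(D(z,w)))⁺ / Θ¹_M(D(z,w))`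
on the sublevel set `{φ ≤ M}`. -/
theorem localSlope_representation
    {S : Type*} [MetricSpace S] [CompleteSpace S]
    (φ : S → ℝ≥0∞) (M : ℝ) (hM : 0 < M)
    (Θ1 Θ2 : ℝ → ℝ)
    (hΘ1cont : ContinuousOn Θ1 (Ici 0)) (hΘ2cont : ContinuousOn Θ2 (Ici 0))
    (hΘ1mono : MonotoneOn Θ1 (Ici 0)) (hΘ2mono : MonotoneOn Θ2 (Ici 0))
    (hΘ1nonneg : ∀ t : ℝ, 0 ≤ t → 0 ≤ Θ1 t) (hΘ2nonneg : ∀ t : ℝ, 0 ≤ t → 0 ≤ Θ2 t)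
    (hΘ1lim : Tendsto (fun t => Θ1 t / t) (𝓝[>] 0) (𝓝 1))
    (hΘ2lim : Tendsto (fun t => Θ2 t / t) (𝓝[>] 0) (𝓝 0))
    (hcurves : ∀ z0 z1 : S, φ z0 ≤ ENNReal.ofReal M →
      ∃ γ : ℝ → S, γ 0 = z0 ∧ γ 1 = z1 ∧
        ∀ s ∈ Icc (0:ℝ) 1,
          dist z0 (γ s) ≤ s * Θ1 (dist z0 z1) ∧
          φ (γ s) ≤ ENNReal.ofReal (1 - s) * φ z0 + ENNReal.ofReal s * φ z1 +
            ENNReal.ofReal (s * Θ2 (dist z0 z1)))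
    (z : S) (hz : φ z ≤ ENNReal.ofReal M) :
    localSlope φ z = ⨆ w ∈ {w : S | w ≠ z},
      (φ z - φ w - ENNReal.ofReal (Θ2 (dist z w))) / ENNReal.ofReal (Θ1 (dist z w)) := by
  have hztop : φ z ≠ ⊤ := ne_top_of_le_ne_top ENNReal.ofReal_ne_top hz
  set L := ⨆ w ∈ {w : S | w ≠ z},
      (φ z - φ w - ENNReal.ofReal (Θ2 (dist z w))) / ENNReal.ofReal (Θ1 (dist z w)) with hLdef
  apply le_antisymm
  · -- `limsup ≤ L`
    rcases eq_or_ne L ⊤ with hLtop | hLtop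
    · rw [hLtop]; exact le_top
    -- the pointwise bound
    have hbound : ∀ᶠ w in 𝓝[≠] z, (φ z - φ w) / edist z w ≤
        L * ENNReal.ofReal (Θ1 (dist z w) / dist z w)
          + ENNReal.ofReal (Θ2 (dist z w) / dist z w) := by
      filter_upwards [self_mem_nhdsWithin] with w hw
      have hwz : w ≠ z := hw
      have hd : 0 < dist z w := dist_pos.2 (Ne.symm hwz)
      have hsup : (φ z - φ w - ENNReal.ofReal (Θ2 (dist z w)))
          / ENNReal.ofReal (Θ1 (dist z w)) ≤ L :=
        le_iSup₂ (f := fun (w : S) (_ : w ∈ {w : S | w ≠ z}) =>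
          (φ z - φ w - ENNReal.ofReal (Θ2 (dist z w))) / ENNReal.ofReal (Θ1 (dist z w))) w hw
      have key : φ z - φ w ≤
          L * ENNReal.ofReal (Θ1 (dist z w)) + ENNReal.ofReal (Θ2 (dist z w)) := by
        rcases eq_or_ne (ENNReal.ofReal (Θ1 (dist z w))) 0 with h10 | h10
        · have hnum : φ z - φ w - ENNReal.ofReal (Θ2 (dist z w)) = 0 := by
            by_contra hne
            rw [h10, ENNReal.div_zero hne] at hsup
            exact hLtop (top_le_iff.1 hsup)
          have : φ z - φ w ≤ ENNReal.ofReal (Θ2 (dist z w)) := tsub_eq_zero_iff_le.1 hnum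
          exact this.trans (le_add_self)
        · have : φ z - φ w - ENNReal.ofReal (Θ2 (dist z w)) ≤
              L * ENNReal.ofReal (Θ1 (dist z w)) :=
            (ENNReal.div_le_iff_le_mul (Or.inl h10) (Or.inl ENNReal.ofReal_ne_top)).1 hsup
          exact tsub_le_iff_right.1 this
      calc (φ z - φ w) / edist z w
          ≤ (L * ENNReal.ofReal (Θ1 (dist z w)) + ENNReal.ofReal (Θ2 (dist z w)))
              / edist z w := ENNReal.div_le_div key le_rfl
        _ = L * ENNReal.ofReal (Θ1 (dist z w)) / ENNReal.ofReal (dist z w)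
              + ENNReal.ofReal (Θ2 (dist z w)) / ENNReal.ofReal (dist z w) := by
            rw [edist_dist, ENNReal.add_div]
        _ = L * ENNReal.ofReal (Θ1 (dist z w) / dist z w)
              + ENNReal.ofReal (Θ2 (dist z w) / dist z w) := by
            rw [ENNReal.ofReal_div_of_pos hd, ENNReal.ofReal_div_of_pos hd, mul_div_assoc]
    -- the majorant tends to `L`
    have hdist : Tendsto (fun w : S => dist z w) (𝓝[≠] z) (𝓝[>] (0:ℝ)) := by
      apply tendsto_nhdsWithin_of_tendsto_nhds_of_eventually_within
      · have : Tendsto (fun w : S => dist z w) (𝓝 z) (𝓝 (dist z z)) :=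
          (continuous_const.dist continuous_id).tendsto z
        simpa using this.mono_left nhdsWithin_le_nhds
      · filter_upwards [self_mem_nhdsWithin] with w hw
        exact dist_pos.2 (Ne.symm hw)
    have h1 : Tendsto (fun w : S => ENNReal.ofReal (Θ1 (dist z w) / dist z w))
        (𝓝[≠] z) (𝓝 1) := by
      have := ENNReal.tendsto_ofReal (hΘ1lim.comp hdist)
      simpa using this
    have h2 : Tendsto (fun w : S => ENNReal.ofReal (Θ2 (dist z w) / dist z w))
        (𝓝[≠] z) (𝓝 0) := by
      have := ENNReal.tendsto_ofReal (hΘ2lim.comp hdist)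
      simpa using this
    have htend : Tendsto (fun w : S =>
        L * ENNReal.ofReal (Θ1 (dist z w) / dist z w)
          + ENNReal.ofReal (Θ2 (dist z w) / dist z w)) (𝓝[≠] z) (𝓝 L) := by
      have := (ENNReal.Tendsto.const_mul (a := L) h1 (Or.inl one_ne_zero)).add h2
      simpa using this
    rcases eq_or_neBot (𝓝[≠] z) with hbot | hbot
    · rw [localSlope, hbot, limsup_bot]; exact zero_le
    calc localSlope φ z
        ≤ limsup (fun w : S =>
            L * ENNReal.ofReal (Θ1 (dist z w) / dist z w)
              + ENNReal.ofReal (Θ2 (dist z w) / dist z w)) (𝓝[≠] z) :=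
          limsup_le_limsup hbound
      _ = L := htend.limsup_eq
  · -- `L ≤ limsup`
    refine iSup₂_le fun w hw => ?_
    rcases eq_or_ne (φ z - φ w - ENNReal.ofReal (Θ2 (dist z w))) 0 with hA | hA
    · rw [hA, ENNReal.zero_div]; exact zero_le
    have hpos : φ w + ENNReal.ofReal (Θ2 (dist z w)) < φ z := by
      have := pos_iff_ne_zero.2 hA
      rw [tsub_tsub] at this
      exact tsub_pos_iff_lt.1 this
    have hwtop : φ w ≠ ⊤ := fun h => by simp [h] at hpos
    set a := (φ z).toReal with hadef
    set b := (φ w).toReal with hbdef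
    have ha : φ z = ENNReal.ofReal a := (ENNReal.ofReal_toReal hztop).symm
    have hb : φ w = ENNReal.ofReal b := (ENNReal.ofReal_toReal hwtop).symm
    have ha0 : 0 ≤ a := ENNReal.toReal_nonneg
    have hb0 : 0 ≤ b := ENNReal.toReal_nonneg
    set t1 := Θ1 (dist z w) with ht1def
    set t2 := Θ2 (dist z w) with ht2def
    have ht20 : 0 ≤ t2 := hΘ2nonneg _ dist_nonneg
    have ht10 : 0 ≤ t1 := hΘ1nonneg _ dist_nonneg
    have hab : b + t2 < a := by
      rw [ha, hb, ← ENNReal.ofReal_add hb0 ht20] at hpos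
      exact (ENNReal.ofReal_lt_ofReal_iff_of_nonneg (by positivity)).1 hpos
    have hapos : 0 < a := lt_of_le_of_lt (by positivity) hab
    obtain ⟨γ, hγ0, hγ1, hγ⟩ := hcurves z w hz
    -- for `s ∈ (0,1]`, `φ (γ s)` is controlled and `γ s ≠ z`
    have hkey : ∀ s : ℝ, 0 < s → s ≤ 1 →
        φ (γ s) ≤ ENNReal.ofReal ((1 - s) * a + s * b + s * t2) ∧
        (1 - s) * a + s * b + s * t2 < a ∧ γ s ≠ z ∧ dist z (γ s) ≤ s * t1 := by
      intro s hs0 hs1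
      obtain ⟨hdγ, hφγ⟩ := hγ s ⟨hs0.le, hs1⟩
      have hub : φ (γ s) ≤ ENNReal.ofReal ((1 - s) * a + s * b + s * t2) := by
        refine hφγ.trans (le_of_eq ?_)
        rw [ha, hb, ← ENNReal.ofReal_mul (by linarith), ← ENNReal.ofReal_mul hs0.le,
          ← ENNReal.ofReal_add (mul_nonneg (by linarith) ha0) (mul_nonneg hs0.le hb0),
          ← ENNReal.ofReal_add
            (add_nonneg (mul_nonneg (by linarith) ha0) (mul_nonneg hs0.le hb0))
            (mul_nonneg hs0.le ht20)]
      have hlt : (1 - s) * a + s * b + s * t2 < a := by nlinarith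
      have hne : γ s ≠ z := by
        intro h
        have : φ (γ s) < φ z := by
          rw [ha]
          exact lt_of_le_of_lt hub ((ENNReal.ofReal_lt_ofReal_iff hapos).2 hlt)
        rw [h] at this
        exact lt_irrefl _ this
      exact ⟨hub, hlt, hne, hdγ⟩
    have ht1pos : 0 < t1 := by
      rcases ht10.lt_or_eq with h | h
      · exact h
      obtain ⟨_, _, hne, hdγ⟩ := hkey (1/2) (by norm_num) (by norm_num)
      rw [← h, mul_zero] at hdγ
      exact absurd (dist_le_zero.1 hdγ).symm hne
    -- rewrite the target as `ofReal ((a - b - t2)/t1)`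
    have htarget : (φ z - φ w - ENNReal.ofReal t2) / ENNReal.ofReal t1
        = ENNReal.ofReal ((a - b - t2) / t1) := by
      rw [ha, hb, ← ENNReal.ofReal_sub _ hb0, ← ENNReal.ofReal_sub _ ht20,
        ENNReal.ofReal_div_of_pos ht1pos]
    rw [htarget]
    refine le_limsup_of_frequently_le ?_
    rw [frequently_iff]
    intro U hU
    rcases Metric.mem_nhdsWithin_iff.1 hU with ⟨ε, hε, hball⟩
    set s := min 1 (ε / (2 * t1)) with hsdef
    have hs0 : 0 < s := lt_min one_pos (div_pos hε (by linarith))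
    have hs1 : s ≤ 1 := min_le_left _ _
    obtain ⟨hub, hlt, hne, hdγ⟩ := hkey s hs0 hs1
    have hdsmall : dist z (γ s) < ε := by
      have : s * t1 ≤ ε / 2 := by
        calc s * t1 ≤ (ε / (2 * t1)) * t1 :=
              mul_le_mul_of_nonneg_right (min_le_right _ _) ht10
          _ = ε / 2 := by field_simp
      linarith
    refine ⟨γ s, hball ⟨?_, hne⟩, ?_⟩
    · rw [Metric.mem_ball, dist_comm]; exact hdsmall
    -- the slope estimate at `γ s`
    have hnum : ENNReal.ofReal (s * (a - b - t2)) ≤ φ z - φ (γ s) := by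
      have h1 : ENNReal.ofReal a - ENNReal.ofReal ((1 - s) * a + s * b + s * t2)
          ≤ φ z - φ (γ s) := by
        rw [ha]; exact tsub_le_tsub_left hub _
      have h2 : ENNReal.ofReal (s * (a - b - t2))
          = ENNReal.ofReal a - ENNReal.ofReal ((1 - s) * a + s * b + s * t2) := by
        rw [← ENNReal.ofReal_sub _ (by nlinarith)]
        ring_nf
      rw [h2]; exact h1
    have hden : edist z (γ s) ≤ ENNReal.ofReal (s * t1) := by
      rw [edist_dist]
      exact ENNReal.ofReal_le_ofReal hdγ
    calc ENNReal.ofReal ((a - b - t2) / t1)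
        = ENNReal.ofReal (s * (a - b - t2)) / ENNReal.ofReal (s * t1) := by
          rw [← ENNReal.ofReal_div_of_pos (mul_pos hs0 ht1pos)]
          congr 1
          rw [mul_div_mul_left _ _ (ne_of_gt hs0)]
      _ ≤ (φ z - φ (γ s)) / edist z (γ s) := ENNReal.div_le_div hnum hden
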